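/- Let G be a group acting on types X and Y. For every natural number n there is a G-equivariant bijection between the n-th symmetric power Sym n (X ⊕ Y) of the disjoint union X ⊕ Y (with the G-action induced componentwise) and the disjoint union over i = 0, 1, …, n of the products Sym i X × Sym (n−i) Y, where G acts on each symmetric power by pushing forward multisets and acts diagonally on the products. -/

import Mathlib

open Multiset

private theorem card_split {X Y : Type*} (m : Multiset (X ⊕ Y)) :
    Multiset.card (m.filterMap Sum.getLeft?) + Multiset.card (m.filterMap Sum.getRight?)
      = Multiset.card m := by
  induction m using Multiset.induction with
  | empty => simp
  | cons z m ih =>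
    cases z with
    | inl x =>
      rw [Multiset.filterMap_cons_some _ _ _ (by rfl : Sum.getLeft? (Sum.inl x) = some x),
        Multiset.filterMap_cons_none _ _ (by rfl : Sum.getRight? (Sum.inl x : X ⊕ Y) = none)]
      simp; omega
    | inr y =>
      rw [Multiset.filterMap_cons_some _ _ _ (by rfl : Sum.getRight? (Sum.inr y) = some y),
        Multiset.filterMap_cons_none _ _ (by rfl : Sum.getLeft? (Sum.inr y : X ⊕ Y) = none)]
      simp; omega

private theorem recombine {X Y : Type*} (m : Multiset (X ⊕ Y)) :
    (m.filterMap Sum.getLeft?).map Sum.inl + (m.filterMap Sum.getRight?).map Sum.inr = m := by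
  induction m using Multiset.induction with
  | empty => simp
  | cons z m ih =>
    cases z with
    | inl x =>
      rw [Multiset.filterMap_cons_some _ _ _ (by rfl : Sum.getLeft? (Sum.inl x) = some x),
        Multiset.filterMap_cons_none _ _ (by rfl : Sum.getRight? (Sum.inl x : X ⊕ Y) = none),
        Multiset.map_cons, Multiset.cons_add, ih]
    | inr y =>
      rw [Multiset.filterMap_cons_some _ _ _ (by rfl : Sum.getRight? (Sum.inr y) = some y),
        Multiset.filterMap_cons_none _ _ (by rfl : Sum.getLeft? (Sum.inr y : X ⊕ Y) = none),
        Multiset.map_cons, Multiset.add_cons, ih]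

private theorem filterMap_add' {α β : Type*} (f : α → Option β) (a b : Multiset α) :
    (a + b).filterMap f = a.filterMap f + b.filterMap f := by
  induction a using Multiset.induction with
  | empty => simp
  | cons z a ih =>
    rcases h : f z with _ | w
    · rw [Multiset.cons_add, Multiset.filterMap_cons_none _ _ h,
        Multiset.filterMap_cons_none _ _ h, ih]
    · rw [Multiset.cons_add, Multiset.filterMap_cons_some _ _ _ h,
        Multiset.filterMap_cons_some _ _ _ h, ih, Multiset.cons_add]

private theorem filterMap_none' {α β : Type*} (m : Multiset α) :
    m.filterMap (fun _ => (none : Option β)) = 0 := by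
  induction m using Multiset.induction with
  | empty => simp
  | cons z m ih => rw [Multiset.filterMap_cons_none _ _ rfl, ih]

private theorem left_of_mk {X Y : Type*} (a : Multiset X) (b : Multiset Y) :
    (a.map Sum.inl + b.map Sum.inr).filterMap (Sum.getLeft? (β := Y)) = a := by
  rw [filterMap_add', Multiset.filterMap_map, Multiset.filterMap_map]
  have h1 : (Sum.getLeft? ∘ (Sum.inl : X → X ⊕ Y)) = some := rfl
  have h2 : (Sum.getLeft? ∘ (Sum.inr : Y → X ⊕ Y)) = fun _ => none := rfl
  rw [h1, h2, Multiset.filterMap_some]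
  rw [filterMap_none', add_zero]

private theorem right_of_mk {X Y : Type*} (a : Multiset X) (b : Multiset Y) :
    (a.map Sum.inl + b.map Sum.inr).filterMap (Sum.getRight? (α := X)) = b := by
  rw [filterMap_add', Multiset.filterMap_map, Multiset.filterMap_map]
  have h1 : (Sum.getRight? ∘ (Sum.inr : Y → X ⊕ Y)) = some := rfl
  have h2 : (Sum.getRight? ∘ (Sum.inl : X → X ⊕ Y)) = fun _ => none := rfl
  rw [h1, h2, Multiset.filterMap_some]
  rw [filterMap_none', zero_add]

private theorem left_equivar {X Y X' Y' : Type*} (f : X → X') (g : Y → Y')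
    (m : Multiset (X ⊕ Y)) :
    (m.map (Sum.map f g)).filterMap Sum.getLeft? = (m.filterMap Sum.getLeft?).map f := by
  rw [Multiset.filterMap_map, Multiset.map_filterMap]
  congr 1; funext z; cases z <;> rfl

private theorem right_equivar {X Y X' Y' : Type*} (f : X → X') (g : Y → Y')
    (m : Multiset (X ⊕ Y)) :
    (m.map (Sum.map f g)).filterMap Sum.getRight? = (m.filterMap Sum.getRight?).map g := by
  rw [Multiset.filterMap_map, Multiset.map_filterMap]
  congr 1; funext z; cases z <;> rfl

private theorem sigma_ext {X Y : Type*} {n : ℕ}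
    {p q : Σ i : Fin (n + 1), Sym X (i : ℕ) × Sym Y (n - (i : ℕ))}
    (h1 : (p.1 : ℕ) = q.1) (h2 : (p.2.1 : Multiset X) = (q.2.1 : Multiset X))
    (h3 : (p.2.2 : Multiset Y) = (q.2.2 : Multiset Y)) : p = q := by
  obtain ⟨⟨i, hi⟩, a, b⟩ := p
  obtain ⟨⟨j, hj⟩, c, d⟩ := q
  simp only at h1
  subst h1
  simp only [Sigma.mk.inj_iff, heq_eq_eq, Prod.mk.injEq, true_and]
  exact ⟨Sym.coe_injective h2, Sym.coe_injective h3⟩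

/-- For a group `G` acting on types `X` and `Y`, and any `n : ℕ`, there is a
`G`-equivariant bijection `Sym (X ⊕ Y) n ≃ Σ i : Fin (n+1), Sym X i × Sym Y (n - i)`,
where `G` acts on `X ⊕ Y` componentwise (via `Sum.map`), on symmetric powers by
pushing forward multisets (`Sym.map`), and diagonally on products. -/
theorem sym_sum_equivariant_equiv {G X Y : Type*} [Group G] [MulAction G X] [MulAction G Y]
    (n : ℕ) :
    ∃ e : Sym (X ⊕ Y) n ≃ (Σ i : Fin (n + 1), Sym X (i : ℕ) × Sym Y (n - (i : ℕ))),
      ∀ (g : G) (s : Sym (X ⊕ Y) n),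
        e (Sym.map (Sum.map (fun x => g • x) (fun y => g • y)) s) =
          ⟨(e s).1, (Sym.map (fun x => g • x) (e s).2.1, Sym.map (fun y => g • y) (e s).2.2)⟩ := by
  have hcard : ∀ s : Sym (X ⊕ Y) n,
      Multiset.card ((s : Multiset (X ⊕ Y)).filterMap Sum.getLeft?) ≤ n := by
    intro s
    have := card_split (s : Multiset (X ⊕ Y))
    rw [Sym.card_coe] at this
    omega
  refine ⟨{
    toFun := fun s =>
      ⟨⟨Multiset.card ((s : Multiset (X ⊕ Y)).filterMap Sum.getLeft?),
          Nat.lt_succ_of_le (hcard s)⟩,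
        ⟨(s : Multiset (X ⊕ Y)).filterMap Sum.getLeft?, rfl⟩,
        ⟨(s : Multiset (X ⊕ Y)).filterMap Sum.getRight?, by
          have := card_split (s : Multiset (X ⊕ Y))
          rw [Sym.card_coe] at this
          simp only [Fin.val_mk]
          omega⟩⟩
    invFun := fun p =>
      ⟨(p.2.1 : Multiset X).map Sum.inl + (p.2.2 : Multiset Y).map Sum.inr, by
        have h1 := p.2.1.2
        have h2 := p.2.2.2
        have h3 : (p.1 : ℕ) ≤ n := Nat.lt_succ_iff.mp p.1.2
        simp [h1, h2]
        omega⟩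
    left_inv := fun s => by
      apply Sym.coe_injective
      exact recombine _
    right_inv := fun p => by
      apply sigma_ext
      · simp only [Fin.val_mk, Sym.coe_mk]
        rw [left_of_mk]
        exact p.2.1.2
      · simp only [Sym.coe_mk]; exact left_of_mk _ _
      · simp only [Sym.coe_mk]; exact right_of_mk _ _ }, ?_⟩
  intro g s
  apply sigma_ext
  · simp only [Equiv.coe_fn_mk, Sym.coe_map]
    show Multiset.card (((s : Multiset (X ⊕ Y)).map (Sum.map (fun x => g • x) (fun y => g • y))).filterMap Sum.getLeft?) = Multiset.card ((s : Multiset (X ⊕ Y)).filterMap Sum.getLeft?)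
    rw [left_equivar]
    simp
  · simp only [Equiv.coe_fn_mk, Sym.coe_map]
    exact left_equivar _ _ _
  · simp only [Equiv.coe_fn_mk, Sym.coe_map]
    exact right_equivar _ _ _
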